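/- arXiv:1210.3830 — 6 statements merged into one kernel-verified Lean document; each statement's English description precedes it below -/
import Mathlib

section
/- Let f : ℕ → (0,∞) be non-decreasing with lim f(k)/k = γ ∈ [0,1). Define μ(k) = (1/(1+f(k))) · ∏_{l=0}^{k-1} f(l)/(1+f(l)). Then μ is a probability measure on ℕ, i.e., ∑_{k≥0} μ(k) = 1. -/
open Finset Filter

/-- If `f : ℕ → (0,∞)` is non-decreasing with `f k / k → γ ∈ [0,1)`, then
`μ k = (1/(1+f k)) * ∏_{l<k} f l/(1+f l)` sums to one. -/
theorem mu_is_probability_measure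
    (f : ℕ → ℝ) (γ : ℝ)
    (hpos : ∀ k, 0 < f k) (hmono : Monotone f)
    (hγ0 : 0 ≤ γ) (hγ1 : γ < 1)
    (hlim : Tendsto (fun k : ℕ => f k / k) atTop (nhds γ))
    (μ : ℕ → ℝ)
    (hμ : ∀ k, μ k = (1 / (1 + f k)) * ∏ l ∈ range k, f l / (1 + f l)) :
    ∑' k : ℕ, μ k = 1 := by
  set P : ℕ → ℝ := fun n => ∏ l ∈ range n, f l / (1 + f l) with hPdef
  have h1f : ∀ k, (0:ℝ) < 1 + f k := fun k => by linarith [hpos k]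
  have hPpos : ∀ n, 0 < P n := fun n =>
    Finset.prod_pos fun l _ => div_pos (hpos l) (h1f l)
  have hstep : ∀ k, μ k = P k - P (k+1) := by
    intro k
    have h2 : P (k+1) = P k * (f k / (1 + f k)) := Finset.prod_range_succ _ _
    rw [hμ k, h2]
    have h := (h1f k).ne'
    have key : (1:ℝ) - f k / (1 + f k) = 1 / (1 + f k) := by
      rw [eq_div_iff h, sub_mul, div_mul_cancel₀ _ h]; ring
    have : P k - P k * (f k / (1 + f k)) = P k * ((1:ℝ) - f k / (1 + f k)) := by ring
    rw [this, key]; ring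
  have hsum : ∀ n, ∑ k ∈ range n, μ k = 1 - P n := by
    intro n
    calc ∑ k ∈ range n, μ k = ∑ k ∈ range n, (P k - P (k+1)) := by
          simp only [hstep]
      _ = P 0 - P n := Finset.sum_range_sub' P n
      _ = 1 - P n := by simp [hPdef]
  -- eventually f l ≤ l
  have hev : ∀ᶠ l : ℕ in atTop, f l ≤ (l:ℝ) := by
    have h1 : ∀ᶠ k : ℕ in atTop, f k / k < 1 := hlim.eventually_lt_const hγ1
    filter_upwards [h1, eventually_ge_atTop 1] with k hk hk1
    have hkpos : (0:ℝ) < k := by exact_mod_cast hk1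
    have := (div_lt_one hkpos).mp hk
    linarith
  obtain ⟨N, hN⟩ := hev.exists_forall_of_atTop
  -- divergence of S n = ∑_{l<n} 1/(1+f l)
  set S : ℕ → ℝ := fun n => ∑ l ∈ range n, 1 / (1 + f l) with hSdef
  set H : ℕ → ℝ := fun n => ∑ l ∈ range n, 1 / ((l:ℝ) + 1) with hHdef
  have hH : Tendsto H atTop atTop := Real.tendsto_sum_range_one_div_nat_succ_atTop
  have hS : Tendsto S atTop atTop := by
    refine tendsto_atTop_mono' atTop ?_
      (tendsto_atTop_add_const_right atTop (-(H N)) hH)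
    filter_upwards [eventually_ge_atTop N] with n hn
    have hIco : H n - H N = ∑ l ∈ Finset.Ico N n, 1 / ((l:ℝ) + 1) := by
      rw [hHdef]
      simp only
      rw [Finset.sum_Ico_eq_sub _ hn]
    have hle : ∑ l ∈ Finset.Ico N n, 1 / ((l:ℝ) + 1)
        ≤ ∑ l ∈ Finset.Ico N n, 1 / (1 + f l) := by
      apply Finset.sum_le_sum
      intro l hl
      have hlN : N ≤ l := (Finset.mem_Ico.mp hl).1
      have : f l ≤ (l:ℝ) := hN l hlN
      apply one_div_le_one_div_of_le (h1f l)
      linarith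
    have hle2 : ∑ l ∈ Finset.Ico N n, 1 / (1 + f l) ≤ S n := by
      rw [hSdef]
      simp only [range_eq_Ico]
      apply Finset.sum_le_sum_of_subset_of_nonneg
        (Finset.Ico_subset_Ico (Nat.zero_le _) le_rfl)
      intro l _ _
      exact one_div_nonneg.mpr (h1f l).le
    rw [show H n + -(H N) = H n - H N by ring, hIco]; linarith
  -- log P n ≤ -S n
  have hlog : ∀ n, Real.log (P n) ≤ -S n := by
    intro n
    have hlp : Real.log (P n) = ∑ l ∈ range n, Real.log (f l / (1 + f l)) := by
      rw [hPdef]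
      exact Real.log_prod fun l _ => (div_pos (hpos l) (h1f l)).ne'
    rw [hlp, hSdef]
    simp only [← Finset.sum_neg_distrib]
    apply Finset.sum_le_sum
    intro l _
    have h1 := Real.log_le_sub_one_of_pos (div_pos (hpos l) (h1f l))
    have h2 : f l / (1 + f l) - 1 = -(1 / (1 + f l)) := by
      rw [div_sub_one (h1f l).ne', neg_div']
      congr 1; ring
    linarith
  have hlogtendsto : Tendsto (fun n => Real.log (P n)) atTop atBot :=
    tendsto_atBot_mono hlog (tendsto_neg_atBot_iff.mpr hS)
  have hP0 : Tendsto P atTop (nhds 0) := by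
    have h := Real.tendsto_exp_atBot.comp hlogtendsto
    exact h.congr fun n => Real.exp_log (hPpos n)
  have hμnonneg : ∀ k, 0 ≤ μ k := by
    intro k
    rw [hμ k]
    exact mul_nonneg (one_div_nonneg.mpr (h1f k).le) (hPpos k).le
  have hhs : HasSum μ 1 := by
    rw [hasSum_iff_tendsto_nat_of_nonneg hμnonneg]
    have : Tendsto (fun n => 1 - P n) atTop (nhds (1 - 0)) :=
      tendsto_const_nhds.sub hP0
    simpa [hsum] using this
  exact hhs.tsum_eq
end

section
/- Let f(k) = γk + β with γ ∈ (0,1) and β > 0. Then the measure μ(k) = (1/(1+f(k))) ∏_{l=0}^{k-1} f(l)/(1+f(l)) equals (1/γ) · Γ(k + β/γ)Γ((β+1)/γ) / (Γ(k + (β+γ+1)/γ)Γ(β/γ)), and consequently μ(k) ~ C·k^{-(1+1/γ)} as k → ∞ with C = Γ((β+1)/γ)/(γ·Γ(β/γ)). -/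
open Finset Filter Real

lemma Gamma_nat_add (a : ℝ) (ha : 0 < a) (n : ℕ) :
    Real.Gamma (n + a) = (∏ j ∈ range n, (a + j)) * Real.Gamma a := by
  induction n with
  | zero => simp
  | succ n ih =>
      have h : ((n : ℝ) + 1 + a) = ((n : ℝ) + a) + 1 := by ring
      rw [Nat.cast_succ, h, Real.Gamma_add_one (by positivity), ih, prod_range_succ]
      ring

lemma tendsto_ratio_aux (a b : ℝ) (ha : 0 < a) :
    Tendsto (fun n : ℕ => (b + n) / (a + n)) atTop (nhds 1) := by
  have h1 : Tendsto (fun n : ℕ => (a + (n : ℝ))) atTop atTop :=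
    tendsto_atTop_add_const_left _ _ tendsto_natCast_atTop_atTop
  have h2 : Tendsto (fun n : ℕ => (b - a) * (a + (n : ℝ))⁻¹ + 1) atTop (nhds 1) := by
    have := (h1.inv_tendsto_atTop.const_mul (b - a)).add (tendsto_const_nhds : Tendsto (fun _ : ℕ => (1:ℝ)) atTop (nhds 1))
    simpa using this
  refine h2.congr (fun n => ?_)
  have han : (0:ℝ) < a + n := by positivity
  field_simp
  ring

lemma tendsto_Gamma_ratio (a b : ℝ) (ha : 0 < a) (hb : 0 < b) :
    Tendsto (fun n : ℕ => Real.Gamma (n + a) / Real.Gamma (n + b) * (n : ℝ) ^ (b - a))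
      atTop (nhds 1) := by
  have hGa := Real.Gamma_pos_of_pos ha
  have hGb := Real.Gamma_pos_of_pos hb
  have h1 : Tendsto (fun n : ℕ => Real.GammaSeq b n / Real.GammaSeq a n) atTop
      (nhds (Real.Gamma b / Real.Gamma a)) :=
    (Real.GammaSeq_tendsto_Gamma b).div (Real.GammaSeq_tendsto_Gamma a) (ne_of_gt hGa)
  have key : Tendsto (fun n : ℕ =>
      Real.Gamma a / Real.Gamma b * (Real.GammaSeq b n / Real.GammaSeq a n) *
        ((b + n) / (a + n))) atTop (nhds 1) := by
    have := ((h1.const_mul (Real.Gamma a / Real.Gamma b)).mul (tendsto_ratio_aux a b ha))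
    have heq : Real.Gamma a / Real.Gamma b * (Real.Gamma b / Real.Gamma a) * 1 = 1 := by
      field_simp
    rwa [heq] at this
  refine key.congr' ?_
  filter_upwards [eventually_ge_atTop 1] with n hn
  have hn0 : (0:ℝ) < (n : ℝ) := by exact_mod_cast hn
  have hPa : (0:ℝ) < ∏ j ∈ range (n+1), (a + j) := prod_pos (fun j _ => by positivity)
  have hPb : (0:ℝ) < ∏ j ∈ range (n+1), (b + j) := prod_pos (fun j _ => by positivity)
  have hfac : (0:ℝ) < ((Nat.factorial n : ℕ) : ℝ) := by exact_mod_cast Nat.factorial_pos n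
  have hna : (0:ℝ) < (n:ℝ) ^ a := Real.rpow_pos_of_pos hn0 a
  have hnb : (0:ℝ) < (n:ℝ) ^ b := Real.rpow_pos_of_pos hn0 b
  have hrs : (n:ℝ) ^ (b - a) = (n:ℝ) ^ b / (n:ℝ) ^ a := Real.rpow_sub hn0 b a
  rw [Gamma_nat_add a ha n, Gamma_nat_add b hb n, Real.GammaSeq, Real.GammaSeq,
    prod_range_succ, prod_range_succ, hrs]
  have han : (0:ℝ) < a + n := by positivity
  have hbn : (0:ℝ) < b + n := by positivity
  field_simp

/-- For the linear attachment rule `f k = γ k + β`, the measure `μ` has an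
explicit Gamma-function formula and satisfies `μ k ~ C k^{-(1+1/γ)}`. -/
theorem mu_linear_gamma_formula_and_asymptotics
    (γ β : ℝ) (hγ0 : 0 < γ) (hγ1 : γ < 1) (hβ : 0 < β)
    (f : ℕ → ℝ) (hf : ∀ k, f k = γ * k + β)
    (μ : ℕ → ℝ)
    (hμ : ∀ k, μ k = (1 / (1 + f k)) * ∏ l ∈ range k, f l / (1 + f l)) :
    (∀ k : ℕ, μ k =
      (1 / γ) * (Real.Gamma (k + β / γ) * Real.Gamma ((β + 1) / γ)) /
        (Real.Gamma (k + (β + γ + 1) / γ) * Real.Gamma (β / γ))) ∧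
    Tendsto
      (fun k : ℕ => μ k /
        ((Real.Gamma ((β + 1) / γ) / (γ * Real.Gamma (β / γ))) *
          (k : ℝ) ^ (-(1 + 1 / γ))))
      atTop (nhds 1) := by
  set a := β / γ with ha_def
  set b := (β + γ + 1) / γ with hb_def
  set c := (β + 1) / γ with hc_def
  have ha : 0 < a := by positivity
  have hb : 0 < b := by positivity
  have hc : 0 < c := by positivity
  have hGa := Real.Gamma_pos_of_pos ha
  have hGb := Real.Gamma_pos_of_pos hb
  have hGc := Real.Gamma_pos_of_pos hc
  have hbc : b = c + 1 := by rw [hb_def, hc_def, div_add_one (ne_of_gt hγ0)]; ring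
  have hfpos : ∀ k : ℕ, 0 < f k := fun k => by rw [hf]; positivity
  have hGka : ∀ k : ℕ, 0 < Real.Gamma (k + a) := fun k => Real.Gamma_pos_of_pos (by positivity)
  have hGkb : ∀ k : ℕ, 0 < Real.Gamma (k + b) := fun k => Real.Gamma_pos_of_pos (by positivity)
  have formula : ∀ k : ℕ, μ k =
      (1 / γ) * (Real.Gamma (k + a) * Real.Gamma c) /
        (Real.Gamma (k + b) * Real.Gamma a) := by
    intro k
    induction k with
    | zero =>
        have h0 : Real.Gamma b = c * Real.Gamma c := by
          rw [hbc, Real.Gamma_add_one (ne_of_gt hc)]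
        have hc1 : γ * c = β + 1 := by rw [hc_def]; field_simp
        rw [hμ 0]
        simp only [Nat.cast_zero, zero_add, range_zero, prod_empty, mul_one, hf 0]
        rw [h0]
        rw [div_eq_div_iff (by positivity) (by positivity)]
        rw [show (1:ℝ) + (γ * 0 + β) = γ * c by rw [hc1]; ring]
        field_simp
    | succ k ih =>
        have hstep : μ (k + 1) = μ k * (f k / (1 + f (k + 1))) := by
          rw [hμ (k+1), hμ k, prod_range_succ]
          have h1 : (0:ℝ) < 1 + f k := by linarith [hfpos k]
          field_simp
        have hGstep : Real.Gamma ((k+1 : ℕ) + a) = (k + a) * Real.Gamma (k + a) := by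
          push_cast
          rw [show (k:ℝ) + 1 + a = ((k:ℝ) + a) + 1 by ring,
            Real.Gamma_add_one (by positivity)]
        have hGstep' : Real.Gamma ((k+1 : ℕ) + b) = (k + b) * Real.Gamma (k + b) := by
          push_cast
          rw [show (k:ℝ) + 1 + b = ((k:ℝ) + b) + 1 by ring,
            Real.Gamma_add_one (by positivity)]
        have hratio : f k / (1 + f (k + 1)) = ((k:ℝ) + a) / ((k:ℝ) + b) := by
          rw [hf k, hf (k+1)]
          push_cast
          rw [div_eq_div_iff (by nlinarith [hfpos (k+1), hf (k+1)]) (by positivity)]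
          rw [ha_def, hb_def]
          field_simp
          ring
        rw [hstep, ih, hratio, hGstep, hGstep']
        have hkb : (0:ℝ) < (k:ℝ) + b := by positivity
        field_simp
  refine ⟨formula, ?_⟩
  have hba : b - a = 1 + 1 / γ := by rw [ha_def, hb_def]; field_simp; ring
  have hmain := tendsto_Gamma_ratio a b ha hb
  refine hmain.congr' ?_
  filter_upwards [eventually_ge_atTop 1] with n hn
  have hn0 : (0:ℝ) < (n : ℝ) := by exact_mod_cast hn
  have hpow : (0:ℝ) < (n:ℝ) ^ (b - a) := Real.rpow_pos_of_pos hn0 _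
  rw [formula n]
  rw [show -(1 + 1/γ) = -(b - a) by rw [hba], Real.rpow_neg (le_of_lt hn0)]
  rw [eq_comm]
  field_simp
end

section
/- Let γ > 0, p ∈ ℕ, k ≥ 1, u ≥ 0. Let τ̃_1, …, τ̃_{k+p} be i.i.d. exponential random variables with rate γ. Then P(∑_{j=1}^{k+p} 1{τ̃_j > u} ≤ p) ≤ exp(p/4) · exp(−(k/8)·e^{−γu}). -/
open MeasureTheory ProbabilityTheory Real Finset

/-- For i.i.d. exponential rate-`γ` variables `τ̃_1, …, τ̃_{k+p}`,
`P(∑ 1{τ̃_j > u} ≤ p) ≤ exp(p/4)·exp(−(k/8)·e^{−γu})`. -/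
theorem indicator_sum_lower_tail
    {Ω : Type*} [MeasurableSpace Ω] (P : Measure Ω) [IsProbabilityMeasure P]
    (γ : ℝ) (hγ : 0 < γ) (p k : ℕ) (hk : 1 ≤ k) (u : ℝ) (hu : 0 ≤ u)
    (τtilde : Fin (k + p) → Ω → ℝ)
    (hmeas : ∀ i, Measurable (τtilde i))
    (hindep : iIndepFun τtilde P)
    (hexp : ∀ i, ∀ t : ℝ, 0 ≤ t →
      P {ω | t < τtilde i ω} = ENNReal.ofReal (Real.exp (-γ * t))) :
    P {ω | (∑ j : Fin (k + p), if u < τtilde j ω then (1 : ℕ) else 0) ≤ p} ≤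
      ENNReal.ofReal (Real.exp ((p : ℝ) / 4) *
        Real.exp (-((k : ℝ) / 8) * Real.exp (-γ * u))) := by
  classical
  set q : ℝ := Real.exp (-γ * u) with hqdef
  have hq0 : 0 < q := Real.exp_pos _
  have hq1 : q ≤ 1 := by
    have : Real.exp (-γ * u) ≤ Real.exp 0 := Real.exp_le_exp.2 (by nlinarith)
    simpa [hqdef] using this
  by_cases hcase : (k : ℝ) * q ≤ 2 * p
  · -- trivial case: RHS ≥ 1
    have h1 : (1 : ℝ) ≤ Real.exp ((p : ℝ) / 4) * Real.exp (-((k : ℝ) / 8) * q) := by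
      rw [← Real.exp_add]
      calc (1:ℝ) = Real.exp 0 := (Real.exp_zero).symm
        _ ≤ _ := Real.exp_le_exp.2 (by nlinarith)
    calc P _ ≤ 1 := prob_le_one
      _ = ENNReal.ofReal 1 := ENNReal.ofReal_one.symm
      _ ≤ _ := ENNReal.ofReal_le_ofReal h1
  · push_neg at hcase
    set A : Fin (k+p) → Set Ω := fun j => {ω | u < τtilde j ω} with hAdef
    have hAmeas : ∀ j, MeasurableSet (A j) :=
      fun j => measurableSet_lt measurable_const (hmeas j)
    have hPA : ∀ j, P (A j) = ENNReal.ofReal q := fun j => hexp j u hu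
    have hPAtoReal : ∀ j, (P (A j)).toReal = q := by
      intro j; rw [hPA j, ENNReal.toReal_ofReal hq0.le]
    set X : Fin (k+p) → Ω → ℝ := fun j ω => if u < τtilde j ω then 1 else 0 with hXdef
    have hXmeas : ∀ j, Measurable (X j) :=
      fun j => Measurable.ite (hAmeas j) measurable_const measurable_const
    have hXindep : iIndepFun X P := by
      have hg : Measurable (fun x : ℝ => if u < x then (1:ℝ) else 0) :=
        Measurable.ite measurableSet_Ioi measurable_const measurable_const
      exact hindep.comp (fun _ x => if u < x then (1:ℝ) else 0) (fun _ => hg)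
    set t : ℝ := -Real.log 2 with htdef
    have ht : t ≤ 0 := neg_nonpos.2 (Real.log_nonneg one_le_two)
    have hexp_t : Real.exp t = 1/2 := by
      rw [htdef, Real.exp_neg, Real.exp_log two_pos]; norm_num
    have hrepr : ∀ j, (fun ω => Real.exp (t * X j ω))
        = fun ω => (A j).indicator (fun _ => Real.exp t) ω
            + (A j)ᶜ.indicator (fun _ => (1:ℝ)) ω := by
      intro j; funext ω
      by_cases h : u < τtilde j ω
      · simp [hXdef, hAdef, Set.indicator_apply, h]
      · simp [hXdef, hAdef, Set.indicator_apply, h]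
    have hint : ∀ j, Integrable (fun ω => Real.exp (t * X j ω)) P := by
      intro j
      rw [hrepr j]
      exact ((integrable_const _).indicator (hAmeas j)).add
        ((integrable_const _).indicator (hAmeas j).compl)
    have hcompl : ∀ j, (P (A j)ᶜ).toReal = 1 - q := by
      intro j
      rw [prob_compl_eq_one_sub (hAmeas j), hPA j]
      rw [ENNReal.toReal_sub_of_le (by simpa using ENNReal.ofReal_le_one.2 hq1) ENNReal.one_ne_top]
      rw [ENNReal.toReal_ofReal hq0.le, ENNReal.toReal_one]
    have hmgf : ∀ j, mgf (X j) P t = 1 - q/2 := by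
      intro j
      have hm : mgf (X j) P t = ∫ ω, Real.exp (t * X j ω) ∂P := rfl
      rw [hm, hrepr j, integral_add ((integrable_const _).indicator (hAmeas j))
        ((integrable_const _).indicator (hAmeas j).compl),
        integral_indicator_const _ (hAmeas j), integral_indicator_const _ (hAmeas j).compl,
        measureReal_def, measureReal_def, hPAtoReal j, hcompl j, hexp_t]
      simp only [smul_eq_mul]
      ring
    have hSmgf : mgf (∑ j, X j) P t = (1 - q/2)^(k+p) := by
      rw [hXindep.mgf_sum hXmeas Finset.univ]
      simp [hmgf, Finset.prod_const, Finset.card_univ]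
    have hintsum : Integrable (fun ω => Real.exp (t * (∑ j, X j) ω)) P :=
      hXindep.integrable_exp_mul_sum hXmeas (fun i _ => hint i)
    have hcher := measure_le_le_exp_mul_mgf (μ := P) (X := ∑ j, X j) (p : ℝ) ht hintsum
    rw [hSmgf] at hcher
    have hevent : {ω | (∑ j : Fin (k+p), if u < τtilde j ω then (1 : ℕ) else 0) ≤ p}
        = {ω | (∑ j, X j) ω ≤ (p : ℝ)} := by
      ext ω
      simp only [Set.mem_setOf_eq, Finset.sum_apply, hXdef]
      rw [← Nat.cast_le (α := ℝ)]
      push_cast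
      rfl
    rw [hevent]
    have hne : P {ω | (∑ j, X j) ω ≤ (p : ℝ)} ≠ ⊤ := measure_ne_top _ _
    rw [← ENNReal.ofReal_toReal hne]
    apply ENNReal.ofReal_le_ofReal
    refine hcher.trans ?_
    -- real inequality
    have h1 : (1 - q/2) ≤ Real.exp (-(q/2)) := by
      have := Real.add_one_le_exp (-(q/2)); linarith
    have h1' : (1 - q/2)^(k+p) ≤ Real.exp (-(q/2))^(k+p) :=
      pow_le_pow_left₀ (by linarith) h1 (k+p)
    rw [← Real.exp_nat_mul] at h1'
    have hlog : Real.log 2 ≤ 3/4 := by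
      have := Real.log_two_lt_d9; linarith
    have hlog0 : (0:ℝ) ≤ Real.log 2 := Real.log_nonneg one_le_two
    have hn : ((k+p:ℕ):ℝ) = (k : ℝ) + (p : ℝ) := by push_cast; ring
    have hp0 : (0:ℝ) ≤ (p : ℝ) := Nat.cast_nonneg p
    have hk0 : (0:ℝ) ≤ (k : ℝ) := Nat.cast_nonneg k
    calc Real.exp (-t * p) * (1 - q/2)^(k+p)
        ≤ Real.exp (-t * p) * Real.exp (((k+p:ℕ):ℝ) * (-(q/2))) := by
          apply mul_le_mul_of_nonneg_left h1' (Real.exp_pos _).le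
      _ = Real.exp (Real.log 2 * p + ((k+p:ℕ):ℝ) * (-(q/2))) := by
          rw [← Real.exp_add, htdef]; ring_nf
      _ ≤ Real.exp ((p : ℝ)/4 + (-((k:ℝ)/8) * q)) := by
          apply Real.exp_le_exp.2
          rw [hn]
          nlinarith [mul_le_mul_of_nonneg_right hcase.le hlog0,
            mul_le_mul_of_nonneg_left hlog (mul_nonneg hk0 hq0.le),
            mul_nonneg hp0 hq0.le]
      _ = Real.exp ((p : ℝ)/4) * Real.exp (-((k:ℝ)/8) * q) := Real.exp_add _ _
end

section
/- Consider the Markov chain on ℕ that jumps from k to k+1 with rate f(k) and from k to 0 with rate 1, where f : ℕ → (0,∞) is non-decreasing with f(k)/k → γ ∈ [0,1). Then the measure μ(k) = (1/(1+f(k))) ∏_{l=0}^{k-1} f(l)/(1+f(l)) is the unique invariant probability measure of this chain. -/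
open Finset Filter

set_option maxHeartbeats 1600000

/-- For the Markov chain on ℕ jumping from `k` to `k+1` with rate `f k` and
from `k` to `0` with rate `1`, the measure `μ k = (1/(1+f k)) ∏_{l<k} f l/(1+f l)` is the
unique invariant probability measure. Invariance is expressed by the balance equations
`μ k (1 + f k) = μ (k-1) f (k-1)` for `k ≥ 1` and `μ 0 (1 + f 0) = ∑_j μ j`. -/
theorem mu_unique_invariant_measure
    (f : ℕ → ℝ) (γ : ℝ)
    (hpos : ∀ k, 0 < f k) (hmono : Monotone f)
    (hγ0 : 0 ≤ γ) (hγ1 : γ < 1)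
    (hlim : Tendsto (fun k : ℕ => f k / k) atTop (nhds γ))
    (μ : ℕ → ℝ)
    (hμ : ∀ k, μ k = (1 / (1 + f k)) * ∏ l ∈ range k, f l / (1 + f l)) :
    -- μ is an invariant probability measure
    ((∀ k, 0 ≤ μ k) ∧ (∑' k : ℕ, μ k) = 1 ∧
      (∀ k : ℕ, μ (k + 1) * (1 + f (k + 1)) = μ k * f k) ∧
      μ 0 * (1 + f 0) = ∑' k : ℕ, μ k) ∧
    -- and it is the unique one
    (∀ ν : ℕ → ℝ, (∀ k, 0 ≤ ν k) → (∑' k : ℕ, ν k) = 1 →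
      (∀ k : ℕ, ν (k + 1) * (1 + f (k + 1)) = ν k * f k) →
      ν 0 * (1 + f 0) = (∑' k : ℕ, ν k) → ν = μ) := by
  have hpos1 : ∀ k, (0:ℝ) < 1 + f k := fun k => by linarith [hpos k]
  obtain ⟨P, hPdef⟩ : ∃ P : ℕ → ℝ, ∀ k, P k = ∏ l ∈ range k, f l / (1 + f l) :=
    ⟨_, fun _ => rfl⟩
  have hμP : ∀ k, μ k = (1 / (1 + f k)) * P k := fun k => by rw [hμ k, hPdef k]
  have hPpos : ∀ k, 0 < P k := fun k => by
    rw [hPdef k]; exact Finset.prod_pos (fun l _ => div_pos (hpos l) (hpos1 l))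
  have hPsucc : ∀ k, P (k+1) = P k * (f k / (1 + f k)) := fun k => by
    rw [hPdef (k+1), hPdef k]; exact Finset.prod_range_succ _ k
  have hμeq : ∀ k, μ k = P k - P (k+1) := by
    intro k
    rw [hμP k, hPsucc k]
    have hk := (hpos1 k).ne'
    generalize P k = p
    field_simp
    ring
  have hμnonneg : ∀ k, 0 ≤ μ k := by
    intro k
    rw [hμP k]
    exact le_of_lt (mul_pos (div_pos one_pos (hpos1 k)) (hPpos k))
  -- upper bound on P via exponentials
  have hkey : ∀ l, f l / (1 + f l) ≤ Real.exp (-(1/(1+f l))) := by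
    intro l
    have hk := (hpos1 l).ne'
    have h1 : f l / (1+f l) = -(1/(1+f l)) + 1 := by
      field_simp
      ring
    rw [h1]
    exact Real.add_one_le_exp _
  have hsum_ub : ∀ n, P n ≤ Real.exp (-∑ l ∈ range n, 1/(1+f l)) := by
    intro n
    rw [hPdef n]
    calc (∏ l ∈ range n, f l / (1 + f l)) ≤ ∏ l ∈ range n, Real.exp (-(1/(1+f l))) :=
          Finset.prod_le_prod (fun l _ => le_of_lt (div_pos (hpos l) (hpos1 l)))
            (fun l _ => hkey l)
      _ = Real.exp (∑ l ∈ range n, -(1/(1+f l))) := (Real.exp_sum _ _).symm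
      _ = Real.exp (-∑ l ∈ range n, 1/(1+f l)) := by rw [Finset.sum_neg_distrib]

  -- non-summability of 1/(1+f l)
  have hnotsum : ¬ Summable (fun l : ℕ => 1/(1+f l)) := by
    intro hs
    have hev : ∀ᶠ k : ℕ in atTop, f k / (k:ℝ) < 1 := hlim.eventually_lt_const hγ1
    rw [eventually_atTop] at hev
    obtain ⟨N0, hN0⟩ := hev
    set M := N0 + 1 with hM
    have hfl : ∀ k : ℕ, f (k + M) < ((k + M : ℕ) : ℝ) := by
      intro k
      have h := hN0 (k + M) (by omega)
      have hk : (0:ℝ) < ((k + M : ℕ) : ℝ) := by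
        exact_mod_cast Nat.pos_of_ne_zero (by omega)
      exact (div_lt_one hk).1 h
    have h1 : Summable (fun k : ℕ => 1/(1+f (k+M))) := (summable_nat_add_iff M).2 hs
    have h2 : Summable (fun k : ℕ => 1/(1+((k+M : ℕ):ℝ))) := by
      refine Summable.of_nonneg_of_le (fun n => by positivity) (fun n => ?_) h1
      refine one_div_le_one_div_of_le (hpos1 (n+M)) ?_
      linarith [hfl n]
    have h2' : Summable (fun k : ℕ => 1/((k + (M+1) : ℕ):ℝ)) := by
      have heq : (fun k : ℕ => 1/((k + (M+1) : ℕ):ℝ))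
          = (fun k : ℕ => 1/(1+((k+M : ℕ):ℝ))) := by
        funext k; push_cast; ring_nf
      rw [heq]; exact h2
    have h4 : Summable (fun n : ℕ => 1/(n:ℝ)) := (summable_nat_add_iff (M+1)).1 h2'
    exact Real.not_summable_one_div_natCast h4
  have hS : Tendsto (fun n => ∑ l ∈ range n, 1/(1+f l)) atTop atTop :=
    (not_summable_iff_tendsto_nat_atTop_of_nonneg
      (fun l => le_of_lt (div_pos one_pos (hpos1 l)))).1 hnotsum
  have hPzero : Tendsto P atTop (nhds 0) := by
    refine squeeze_zero (fun n => (hPpos n).le) hsum_ub ?_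
    exact Real.tendsto_exp_atBot.comp (tendsto_neg_atTop_atBot.comp hS)
  have hP0 : P 0 = 1 := by rw [hPdef 0]; exact Finset.prod_range_zero _
  have hpartial : ∀ n, ∑ i ∈ range n, μ i = 1 - P n := by
    intro n
    calc ∑ i ∈ range n, μ i = ∑ i ∈ range n, (P i - P (i+1)) :=
          Finset.sum_congr rfl (fun i _ => hμeq i)
      _ = P 0 - P n := Finset.sum_range_sub' P n
      _ = 1 - P n := by rw [hP0]
  have hhassum : HasSum μ 1 := by
    rw [hasSum_iff_tendsto_nat_of_nonneg hμnonneg]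
    have h : Tendsto (fun n => 1 - P n) atTop (nhds (1 - 0)) :=
      tendsto_const_nhds.sub hPzero
    rw [sub_zero] at h
    exact Tendsto.congr (fun n => (hpartial n).symm) h
  have htsum : (∑' k : ℕ, μ k) = 1 := hhassum.tsum_eq
  have hbal : ∀ k : ℕ, μ (k + 1) * (1 + f (k + 1)) = μ k * f k := by
    intro k
    have h1 := (hpos1 k).ne'
    have h2 := (hpos1 (k+1)).ne'
    rw [hμP (k+1), hμP k, hPsucc k]
    generalize P k = p
    field_simp
  have hμ0 : μ 0 = 1 / (1 + f 0) := by
    rw [hμP 0, hP0, mul_one]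
  have hμ0pos : 0 < μ 0 := by rw [hμ0]; exact div_pos one_pos (hpos1 0)
  refine ⟨⟨hμnonneg, htsum, hbal, ?_⟩, ?_⟩
  · rw [hμ0, htsum]
    exact one_div_mul_cancel (hpos1 0).ne'
  · intro ν hν0 hνsum hνbal _
    set c : ℝ := ν 0 / μ 0 with hc
    have hcμ : ∀ k, ν k = c * μ k := by
      intro k
      induction k with
      | zero =>
        rw [hc, div_mul_cancel₀ _ hμ0pos.ne']
      | succ n ih =>
        have hne := (hpos1 (n+1)).ne'
        have e1 : ν (n+1) = ν n * f n / (1 + f (n+1)) :=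
          (eq_div_iff hne).2 (hνbal n)
        have e2 : μ (n+1) = μ n * f n / (1 + f (n+1)) :=
          (eq_div_iff hne).2 (hbal n)
        rw [e1, e2, ih]
        ring
    have hc1 : (1:ℝ) = c := by
      calc (1:ℝ) = ∑' k, ν k := hνsum.symm
        _ = ∑' k, c * μ k := tsum_congr hcμ
        _ = c * ∑' k, μ k := tsum_mul_left
        _ = c := by rw [htsum, mul_one]
    funext k
    rw [hcμ k, ← hc1, one_mul]
end

section
/- Let φ : [0,∞) → [0,1] be non-increasing with generalized inverse φ^{-1}(u) := inf{x > 0 : φ(x) < u}. Then for any z ≥ 0, ∫_0^{φ(z)} φ^{-1}(u) du = ∫_0^∞ φ(z ∨ v) dv, both sides equaling the Lebesgue area of {(u,v) ∈ (0,∞)² : u ≤ φ(z), v ≤ φ^{-1}(u)} ∪-type region {(u,v) : u ≤ φ(z) and u ≤ φ(v)}. -/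
open MeasureTheory Set

/-- For non-increasing `φ : [0,∞) → [0,1]` with generalized inverse
`φ⁻¹(u) = inf{x > 0 : φ x < u}`, for any `z ≥ 0`:
`∫_0^{φ(z)} φ⁻¹(u) du = ∫_0^∞ φ(z ∨ v) dv`, both equal to the area of
`{(u,v) ∈ (0,∞)² : u ≤ φ z ∧ u ≤ φ v}`. -/
theorem inverse_integral_eq_max_integral
    (φ : ℝ → ℝ)
    (hanti : AntitoneOn φ (Ici 0))
    (h0 : ∀ x, 0 ≤ x → 0 ≤ φ x) (h1 : ∀ x, 0 ≤ x → φ x ≤ 1)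
    (hmeas : Measurable φ)
    (hint : Integrable (fun x => φ x) (volume.restrict (Ioi (0 : ℝ))))
    (φinv : ℝ → ℝ)
    (hφinv : ∀ u, φinv u = sInf {x : ℝ | 0 < x ∧ φ x < u})
    (z : ℝ) (hz : 0 ≤ z) :
    (∫ u in Ioo (0 : ℝ) (φ z), φinv u = ∫ v in Ioi (0 : ℝ), φ (max z v)) ∧
    ∫ u in Ioo (0 : ℝ) (φ z), φinv u =
      (volume {p : ℝ × ℝ | 0 < p.1 ∧ 0 < p.2 ∧ p.1 ≤ φ z ∧ p.1 ≤ φ p.2}).toReal := by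
  set S : Set (ℝ × ℝ) := {p : ℝ × ℝ | 0 < p.1 ∧ 0 < p.2 ∧ p.1 ≤ φ z ∧ p.1 ≤ φ p.2} with hSdef
  have hS : MeasurableSet S := by
    apply (measurableSet_lt measurable_const measurable_fst).inter
    apply ((measurableSet_lt measurable_const measurable_snd).inter)
    exact (measurableSet_le measurable_fst measurable_const).inter
      (measurableSet_le measurable_fst (hmeas.comp measurable_snd))
  -- nonemptiness of the sublevel sets
  have hne : ∀ u : ℝ, 0 < u → {x : ℝ | 0 < x ∧ φ x < u}.Nonempty := by
    intro u hu
    by_contra h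
    push_neg at h
    simp only [Set.not_nonempty_iff_eq_empty, Set.eq_empty_iff_forall_notMem] at h
    have hsub : Ioi (0:ℝ) ⊆ {x : ℝ | u ≤ φ x} := by
      intro x hx
      have := h x
      simp only [Set.mem_setOf_eq, not_and, not_lt] at this
      exact this hx
    have hfin := hint.measure_ge_lt_top hu
    rw [Measure.restrict_apply (measurableSet_le measurable_const hmeas)] at hfin
    have hcover : Ioi (0:ℝ) ⊆ {x : ℝ | u ≤ φ x} ∩ Ioi 0 := fun x hx => ⟨hsub hx, hx⟩
    have htop : (⊤ : ENNReal) ≤ volume ({x : ℝ | u ≤ φ x} ∩ Ioi 0) := by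
      calc (⊤ : ENNReal) = volume (Ioi (0:ℝ)) := Real.volume_Ioi.symm
        _ ≤ _ := measure_mono hcover
    exact hfin.not_ge htop
  have hBdd : ∀ u : ℝ, BddBelow {x : ℝ | 0 < x ∧ φ x < u} :=
    fun u => ⟨0, fun x hx => hx.1.le⟩
  have hinv_nonneg : ∀ u : ℝ, 0 ≤ φinv u := by
    intro u
    rw [hφinv u]
    exact Real.sInf_nonneg (fun x hx => hx.1.le)
  -- measure of vertical sections
  have hT : ∀ u : ℝ, 0 < u →
      volume {v : ℝ | 0 < v ∧ u ≤ φ v} = ENNReal.ofReal (φinv u) := by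
    intro u hu
    have hEne := hne u hu
    have hsub1 : {v : ℝ | 0 < v ∧ u ≤ φ v} ⊆ Ioc 0 (φinv u) := by
      intro v hv
      refine ⟨hv.1, ?_⟩
      rw [hφinv u]
      refine le_csInf hEne (fun x hx => ?_)
      by_contra hxv
      push_neg at hxv
      have hvx : φ v ≤ φ x := hanti hx.1.le hv.1.le hxv.le
      exact absurd (hv.2.trans hvx) (not_le.2 hx.2)
    have hsub2 : Ioo 0 (φinv u) ⊆ {v : ℝ | 0 < v ∧ u ≤ φ v} := by
      intro v hv
      refine ⟨hv.1, ?_⟩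
      by_contra hlt
      push_neg at hlt
      have : φinv u ≤ v := by
        rw [hφinv u]; exact csInf_le (hBdd u) ⟨hv.1, hlt⟩
      exact absurd hv.2 (not_lt.2 this)
    refine le_antisymm ?_ ?_
    · calc volume {v : ℝ | 0 < v ∧ u ≤ φ v} ≤ volume (Ioc 0 (φinv u)) := measure_mono hsub1
        _ = ENNReal.ofReal (φinv u) := by rw [Real.volume_Ioc, sub_zero]
    · calc ENNReal.ofReal (φinv u) = volume (Ioo 0 (φinv u)) := by
            rw [Real.volume_Ioo, sub_zero]
        _ ≤ volume {v : ℝ | 0 < v ∧ u ≤ φ v} := measure_mono hsub2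
  -- key1 : area via vertical sections
  have key1 : volume S = ∫⁻ u in Ioc (0:ℝ) (φ z), ENNReal.ofReal (φinv u) := by
    rw [MeasureTheory.Measure.volume_eq_prod, Measure.prod_apply hS]
    have : ∀ u : ℝ, volume (Prod.mk u ⁻¹' S) =
        (Ioc (0:ℝ) (φ z)).indicator (fun u => ENNReal.ofReal (φinv u)) u := by
      intro u
      by_cases hu : u ∈ Ioc (0:ℝ) (φ z)
      · have : Prod.mk u ⁻¹' S = {v : ℝ | 0 < v ∧ u ≤ φ v} := by
          ext v
          simp only [hSdef, Set.mem_preimage, Set.mem_setOf_eq]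
          exact ⟨fun h => ⟨h.2.1, h.2.2.2⟩, fun h => ⟨hu.1, h.1, hu.2, h.2⟩⟩
        rw [this, hT u hu.1, Set.indicator_of_mem hu]
      · have : Prod.mk u ⁻¹' S = ∅ := by
          ext v
          simp only [hSdef, Set.mem_preimage, Set.mem_setOf_eq, Set.mem_empty_iff_false,
            iff_false]
          intro h
          exact hu ⟨h.1, h.2.2.1⟩
        rw [this, Set.indicator_of_notMem hu, measure_empty]
    simp only [this]
    rw [lintegral_indicator measurableSet_Ioc]
  -- key2 : area via horizontal sections
  have key2 : volume S = ∫⁻ v in Ioi (0:ℝ), ENNReal.ofReal (φ (max z v)) := by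
    rw [MeasureTheory.Measure.volume_eq_prod, Measure.prod_apply_symm hS]
    have : ∀ v : ℝ, volume ((fun u => (u, v)) ⁻¹' S) =
        (Ioi (0:ℝ)).indicator (fun v => ENNReal.ofReal (φ (max z v))) v := by
      intro v
      by_cases hv : v ∈ Ioi (0:ℝ)
      · have hmax : φ (max z v) = min (φ z) (φ v) := by
          rcases le_total v z with h | h
          · rw [max_eq_left h, min_eq_left (hanti (Set.mem_Ici.2 (le_of_lt hv)) hz h)]
          · rw [max_eq_right h, min_eq_right (hanti hz (hz.trans h) h)]
        have : (fun u => (u, v)) ⁻¹' S = Ioc 0 (min (φ z) (φ v)) := by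
          ext u
          simp only [hSdef, Set.mem_preimage, Set.mem_setOf_eq, Set.mem_Ioc, le_min_iff]
          exact ⟨fun h => ⟨h.1, h.2.2.1, h.2.2.2⟩, fun h => ⟨h.1, hv, h.2.1, h.2.2⟩⟩
        rw [this, Real.volume_Ioc, sub_zero, Set.indicator_of_mem hv, hmax]
      · have : (fun u => (u, v)) ⁻¹' S = ∅ := by
          ext u
          simp only [hSdef, Set.mem_preimage, Set.mem_setOf_eq, Set.mem_empty_iff_false,
            iff_false]
          intro h
          exact hv h.2.1
        rw [this, Set.indicator_of_notMem hv, measure_empty]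
    simp only [this]
    rw [lintegral_indicator measurableSet_Ioi]
  -- antitonicity of φinv on (0,∞)
  have hinv_anti : AntitoneOn φinv (Ioi (0:ℝ)) := by
    intro u hu u' hu' huu'
    rw [hφinv u, hφinv u']
    refine csInf_le_csInf (hBdd u') (hne u hu) ?_
    intro x hx
    exact ⟨hx.1, lt_of_lt_of_le hx.2 huu'⟩
  -- left integral
  have eqL : ∫ u in Ioo (0:ℝ) (φ z), φinv u = (volume S).toReal := by
    rw [integral_eq_lintegral_of_nonneg_ae]
    · rw [key1]
      congr 1
      exact setLIntegral_congr Ioo_ae_eq_Ioc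
    · exact Filter.Eventually.of_forall (fun u => hinv_nonneg u)
    · exact (aemeasurable_restrict_of_antitoneOn measurableSet_Ioo
        (hinv_anti.mono Ioo_subset_Ioi_self)).aestronglyMeasurable
  -- right integral
  have eqR : ∫ v in Ioi (0:ℝ), φ (max z v) = (volume S).toReal := by
    rw [integral_eq_lintegral_of_nonneg_ae]
    · rw [key2]
    · refine (ae_restrict_iff' measurableSet_Ioi).2 (Filter.Eventually.of_forall (fun v hv => ?_))
      exact h0 _ (le_trans hz (le_max_left _ _))
    · exact (hmeas.comp (measurable_const.max measurable_id)).aestronglyMeasurable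
  exact ⟨eqL.trans eqR.symm, eqL⟩
end

section
/- Let φ : [0,∞) → [0,1] be non-increasing, integrable, and define I(a) := 2∫_0^a v φ(v) dv + a ∫_a^∞ φ(v) dv for a > 0. If ∫_0^∞ v φ(v) dv < ∞, then I(a) ≍ a ∧ 1, i.e., there exist constants 0 < c ≤ C such that c(a ∧ 1) ≤ I(a) ≤ C(a ∧ 1) for all a > 0. -/
open MeasureTheory Set

/-- If `φ : [0,∞) → [0,1]` is non-increasing with `∫_0^∞ φ = 1/2` and
`∫_0^∞ v φ(v) dv < ∞`, then `I(a) = 2∫_0^a vφ(v)dv + a∫_a^∞ φ(v)dv ≍ a ∧ 1`. -/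
theorem I_asymptotics_integrable_case
    (φ : ℝ → ℝ)
    (hanti : AntitoneOn φ (Ici 0))
    (h0 : ∀ x, 0 ≤ x → 0 ≤ φ x) (h1 : ∀ x, 0 ≤ x → φ x ≤ 1)
    (hmeas : Measurable φ)
    (hint : ∫ x in Ioi (0 : ℝ), φ x = 1 / 2)
    (hmom : Integrable (fun v => v * φ v) (volume.restrict (Ioi (0 : ℝ))))
    (I : ℝ → ℝ)
    (hI : ∀ a, I a = 2 * (∫ v in Ioc (0 : ℝ) a, v * φ v) + a * ∫ v in Ioi a, φ v) :
    ∃ c C : ℝ, 0 < c ∧ c ≤ C ∧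
      ∀ a : ℝ, 0 < a → c * min a 1 ≤ I a ∧ I a ≤ C * min a 1 := by
  -- integrability of φ on (0,∞)
  have hφint : IntegrableOn φ (Ioi 0) := by
    by_contra h
    rw [integral_undef h] at hint
    norm_num at hint
  have hvint : IntegrableOn (fun v => v * φ v) (Ioi 0) := hmom
  -- there is a point b > 0 with φ b > 0
  have hb : ∃ b, 0 < b ∧ 0 < φ b := by
    by_contra h
    push_neg at h
    have hz : ∫ x in Ioi (0 : ℝ), φ x = 0 := by
      rw [setIntegral_congr_fun measurableSet_Ioi
        (fun x hx => le_antisymm (h x hx) (h0 x (le_of_lt hx)))]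
      simp
    rw [hz] at hint
    norm_num at hint
  obtain ⟨b, hb0, hbφ⟩ := hb
  -- helper: lower bound for ∫ φ on Ioc c d
  have L1 : ∀ c d : ℝ, 0 ≤ c → c ≤ d → (d - c) * φ d ≤ ∫ v in Ioc c d, φ v := by
    intro c d hc hcd
    have hsub : Ioc c d ⊆ Ioi 0 := fun x hx => lt_of_le_of_lt hc hx.1
    have hint' : IntegrableOn φ (Ioc c d) := hφint.mono_set hsub
    have hconst : ((d - c) * φ d : ℝ) = ∫ _ in Ioc c d, φ d := by
      rw [setIntegral_const, measureReal_def, Real.volume_Ioc, ENNReal.toReal_ofReal (by linarith),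
        smul_eq_mul]
    rw [hconst]
    refine setIntegral_mono_on (integrableOn_const measure_Ioc_lt_top.ne) hint'
      measurableSet_Ioc (fun x hx => ?_)
    exact hanti (mem_Ici.2 (le_of_lt (lt_of_le_of_lt hc hx.1))) (mem_Ici.2 (hc.trans hcd)) hx.2
  -- helper: lower bound for ∫ vφ on Ioc c d
  have L2 : ∀ c d : ℝ, 0 ≤ c → c ≤ d → c * (d - c) * φ d ≤ ∫ v in Ioc c d, v * φ v := by
    intro c d hc hcd
    have hsub : Ioc c d ⊆ Ioi 0 := fun x hx => lt_of_le_of_lt hc hx.1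
    have hint' : IntegrableOn (fun v => v * φ v) (Ioc c d) := hvint.mono_set hsub
    have hconst : (c * (d - c) * φ d : ℝ) = ∫ _ in Ioc c d, c * φ d := by
      rw [setIntegral_const, measureReal_def, Real.volume_Ioc, ENNReal.toReal_ofReal (by linarith),
        smul_eq_mul]
      ring
    rw [hconst]
    refine setIntegral_mono_on (integrableOn_const measure_Ioc_lt_top.ne) hint'
      measurableSet_Ioc (fun x hx => ?_)
    have hx0 : (0 : ℝ) < x := lt_of_le_of_lt hc hx.1
    have hφd : 0 ≤ φ d := h0 d (hc.trans hcd)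
    have hφx : φ d ≤ φ x := hanti (mem_Ici.2 hx0.le) (mem_Ici.2 (hc.trans hcd)) hx.2
    exact mul_le_mul hx.1.le hφx hφd hx0.le
  -- a.e. nonnegativity helpers
  have nn : ∀ s : Set ℝ, MeasurableSet s → s ⊆ Ioi 0 →
      0 ≤ᵐ[volume.restrict s] φ := fun s hs hsub =>
    (ae_restrict_iff' hs).2 (ae_of_all _ fun x hx => h0 x (le_of_lt (hsub hx)))
  have nnv : ∀ s : Set ℝ, MeasurableSet s → s ⊆ Ioi 0 →
      0 ≤ᵐ[volume.restrict s] (fun v => v * φ v) := fun s hs hsub =>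
    (ae_restrict_iff' hs).2 (ae_of_all _ fun x hx =>
      mul_nonneg (le_of_lt (hsub hx)) (h0 x (le_of_lt (hsub hx))))
  set M := ∫ v in Ioi (0 : ℝ), v * φ v with hMdef
  have hM0 : 0 ≤ M := setIntegral_nonneg measurableSet_Ioi
    (fun x hx => mul_nonneg (le_of_lt hx) (h0 x (le_of_lt hx)))
  set c1 : ℝ := (b / 2) * φ b with hc1def
  set c2 : ℝ := (b * b / 8) * φ b with hc2def
  have hc1 : 0 < c1 := mul_pos (by linarith) hbφ
  have hc2 : 0 < c2 := mul_pos (by positivity) hbφ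
  refine ⟨min c1 c2, max (3 / 2 + 3 * M) (min c1 c2), lt_min hc1 hc2,
    le_max_right _ _, fun a ha => ?_⟩
  have hmin0 : 0 ≤ min a 1 := le_min ha.le zero_le_one
  have hmin1 : min a 1 ≤ 1 := min_le_right _ _
  have hmina : min a 1 ≤ a := min_le_left _ _
  constructor
  · -- lower bound
    rcases le_or_gt a (b / 2) with hab | hab
    · -- small a : use the tail term
      have hsub1 : Ioi a ⊆ Ioi 0 := fun x hx => lt_trans ha hx
      have h2 : ∫ v in Ioc (b / 2) b, φ v ≤ ∫ v in Ioi a, φ v :=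
        setIntegral_mono_set (hφint.mono_set hsub1) (nn _ measurableSet_Ioi hsub1)
          (HasSubset.Subset.eventuallyLE (fun x hx => lt_of_le_of_lt hab hx.1))
      have h3 : (b / 2) * φ b ≤ ∫ v in Ioi a, φ v := by
        have := L1 (b / 2) b (by linarith) (by linarith)
        have hbb : (b - b / 2) = b / 2 := by ring
        rw [hbb] at this
        linarith
      have hT1 : 0 ≤ ∫ v in Ioc (0 : ℝ) a, v * φ v :=
        setIntegral_nonneg measurableSet_Ioc
          (fun x hx => mul_nonneg hx.1.le (h0 x hx.1.le))
      have key : c1 * a ≤ I a := by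
        rw [hI a]
        have : a * c1 ≤ a * ∫ v in Ioi a, φ v :=
          mul_le_mul_of_nonneg_left h3 ha.le
        nlinarith
      calc min c1 c2 * min a 1 ≤ c1 * a :=
            mul_le_mul (min_le_left _ _) hmina hmin0 hc1.le
        _ ≤ I a := key
    · -- large a : use the bulk term
      have hsubIoc : Ioc (0 : ℝ) a ⊆ Ioi 0 := fun x hx => hx.1
      have h2 : ∫ v in Ioc (b / 4) (b / 2), v * φ v ≤ ∫ v in Ioc (0 : ℝ) a, v * φ v :=
        setIntegral_mono_set (hvint.mono_set hsubIoc) (nnv _ measurableSet_Ioc hsubIoc)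
          (HasSubset.Subset.eventuallyLE (fun x hx =>
            ⟨lt_of_le_of_lt (by linarith) hx.1, hx.2.trans (by linarith)⟩))
      have h3 : (b / 4) * (b / 2 - b / 4) * φ (b / 2) ≤
          ∫ v in Ioc (b / 4) (b / 2), v * φ v :=
        L2 (b / 4) (b / 2) (by linarith) (by linarith)
      have hφhalf : φ b ≤ φ (b / 2) :=
        hanti (mem_Ici.2 (by linarith)) (mem_Ici.2 hb0.le) (by linarith)
      have hT2 : 0 ≤ ∫ v in Ioi a, φ v :=
        setIntegral_nonneg measurableSet_Ioi (fun x hx => h0 x (le_of_lt (lt_trans ha hx)))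
      have key : c2 ≤ I a := by
        rw [hI a]
        have h4 : (b / 4) * (b / 4) * φ b ≤ ∫ v in Ioc (0 : ℝ) a, v * φ v := by
          have : (b / 4) * (b / 2 - b / 4) * φ b ≤ (b / 4) * (b / 2 - b / 4) * φ (b / 2) :=
            mul_le_mul_of_nonneg_left hφhalf (by nlinarith)
          nlinarith
        nlinarith [mul_nonneg ha.le hT2]
      calc min c1 c2 * min a 1 ≤ c2 * 1 :=
            mul_le_mul (min_le_right _ _) hmin1 hmin0 hc2.le
        _ = c2 := mul_one _
        _ ≤ I a := key
  · -- upper bound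
    have hC : (3 / 2 + 3 * M : ℝ) ≤ max (3 / 2 + 3 * M) (min c1 c2) := le_max_left _ _
    rcases le_or_gt a 1 with ha1 | ha1
    · -- a ≤ 1
      have hsubIoc : Ioc (0 : ℝ) a ⊆ Ioi 0 := fun x hx => hx.1
      have h2 : ∫ v in Ioc (0 : ℝ) a, v * φ v ≤ a * ∫ v in Ioc (0 : ℝ) a, φ v := by
        rw [← integral_const_mul]
        exact setIntegral_mono_on (hvint.mono_set hsubIoc)
          ((hφint.mono_set hsubIoc).const_mul a) measurableSet_Ioc
          (fun x hx => mul_le_mul_of_nonneg_right hx.2 (h0 x hx.1.le))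
      have h3 : ∫ v in Ioc (0 : ℝ) a, φ v ≤ 1 / 2 := by
        rw [← hint]
        exact setIntegral_mono_set hφint (nn _ measurableSet_Ioi (fun x hx => hx))
          (HasSubset.Subset.eventuallyLE hsubIoc)
      have h4 : ∫ v in Ioi a, φ v ≤ 1 / 2 := by
        rw [← hint]
        exact setIntegral_mono_set hφint (nn _ measurableSet_Ioi (fun x hx => hx))
          (HasSubset.Subset.eventuallyLE (fun x hx => lt_trans ha hx))
      have : I a ≤ (3 / 2) * a := by
        rw [hI a]
        nlinarith
      have hmineq : min a 1 = a := min_eq_left ha1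
      rw [hmineq]
      calc I a ≤ (3 / 2) * a := this
        _ ≤ (3 / 2 + 3 * M) * a := by nlinarith
        _ ≤ max (3 / 2 + 3 * M) (min c1 c2) * a :=
            mul_le_mul_of_nonneg_right hC ha.le
    · -- a > 1
      have hsubIoc : Ioc (0 : ℝ) a ⊆ Ioi 0 := fun x hx => hx.1
      have hsubIoi : Ioi a ⊆ Ioi 0 := fun x hx => lt_trans ha hx
      have h2 : ∫ v in Ioc (0 : ℝ) a, v * φ v ≤ M :=
        setIntegral_mono_set hvint (nnv _ measurableSet_Ioi (fun x hx => hx))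
          (HasSubset.Subset.eventuallyLE hsubIoc)
      have h3 : a * ∫ v in Ioi a, φ v ≤ ∫ v in Ioi a, v * φ v := by
        rw [← integral_const_mul]
        exact setIntegral_mono_on ((hφint.mono_set hsubIoi).const_mul a)
          (hvint.mono_set hsubIoi) measurableSet_Ioi
          (fun x hx => mul_le_mul_of_nonneg_right (le_of_lt hx)
            (h0 x (le_of_lt (lt_trans ha hx))))
      have h4 : ∫ v in Ioi a, v * φ v ≤ M :=
        setIntegral_mono_set hvint (nnv _ measurableSet_Ioi (fun x hx => hx))
          (HasSubset.Subset.eventuallyLE hsubIoi)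
      have hmineq : min a 1 = 1 := min_eq_right ha1.le
      rw [hmineq, mul_one]
      calc I a ≤ 3 * M := by rw [hI a]; nlinarith
        _ ≤ 3 / 2 + 3 * M := by linarith
        _ ≤ max (3 / 2 + 3 * M) (min c1 c2) := hC
end
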